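/- Let X be a set, H a Hilbert space, and ξ, η : X → H bounded maps with ‖ξ(x)‖ ≤ 1 and ‖η(y)‖ ≤ 1 for all x, y. Define k(x,y) = ⟨ξ(x), η(y)⟩. Then for any finitely supported function T : X × X → ℂ viewed as a kernel of an operator on ℓ²(X), the operator with kernel (x,y) ↦ k(x,y)·T(x,y) has operator norm at most the operator norm of T (i.e., the Schur multiplier S_k is bounded with norm at most 1 on such operators). -/

import Mathlib

open ComplexConjugate

namespace SchurAux

variable {X : Type*} [DecidableEq X]


lemma sum_single_apply (s : Finset X) (c : X → ℂ) (z : X) :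
    (↑(∑ x ∈ s, lp.single 2 x (c x) : lp (fun _ : X => ℂ) 2) : ∀ _ : X, ℂ) z
      = if z ∈ s then c z else 0 := by
  rw [lp.coeFn_sum, Finset.sum_apply]
  simp [lp.single_apply]

lemma norm_sq_sum_single (s : Finset X) (c : X → ℂ) :
    ‖(∑ x ∈ s, lp.single 2 x (c x) : lp (fun _ : X => ℂ) 2)‖ ^ 2
      = ∑ x ∈ s, ‖c x‖ ^ 2 := by
  have h := lp.norm_sum_single (p := 2) (E := fun _ : X => ℂ) (by norm_num) c s
  have h2 : (ENNReal.toReal 2) = (2 : ℝ) := by norm_num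
  rw [h2] at h
  calc ‖(∑ x ∈ s, lp.single 2 x (c x) : lp (fun _ : X => ℂ) 2)‖ ^ 2
      = ‖(∑ x ∈ s, lp.single 2 x (c x) : lp (fun _ : X => ℂ) 2)‖ ^ (2:ℝ) := by
        rw [← Real.rpow_natCast]; norm_num
    _ = ∑ x ∈ s, ‖c x‖ ^ (2:ℝ) := h
    _ = ∑ x ∈ s, ‖c x‖ ^ 2 := by
        refine Finset.sum_congr rfl fun x _ => ?_
        rw [← Real.rpow_natCast]; norm_num

lemma inner_sum_single_left (s : Finset X) (c : X → ℂ) (g : lp (fun _ : X => ℂ) 2) :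
    (inner ℂ (∑ x ∈ s, lp.single 2 x (c x)) g : ℂ) = ∑ x ∈ s, conj (c x) * g x := by
  rw [sum_inner]
  exact Finset.sum_congr rfl fun x _ => by rw [lp.inner_single_left]; exact RCLike.inner_apply' _ _

end SchurAux


open ComplexConjugate

namespace SchurAux2

variable {X : Type*} [DecidableEq X]

set_option synthInstance.maxHeartbeats 1000000
set_option maxHeartbeats 1000000

lemma single_eq_smul (y : X) (c : ℂ) :
    (lp.single 2 y c : lp (fun _ : X => ℂ) 2) = c • lp.single 2 y (1 : ℂ) := by
  rw [← lp.single_smul (E := fun _ : X => ℂ)]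
  norm_num

lemma inner_op_sum (W : lp (fun _ : X => ℂ) 2 →L[ℂ] lp (fun _ : X => ℂ) 2)
    (A B : Finset X) (M : X → X → ℂ)
    (hW : ∀ y ∈ B, W (lp.single 2 y 1) = ∑ x ∈ A, lp.single 2 x (conj (M x y)))
    (c : X → ℂ) (g : lp (fun _ : X => ℂ) 2) :
    (inner ℂ (W (∑ y ∈ B, lp.single 2 y (c y))) g : ℂ)
      = ∑ y ∈ B, ∑ x ∈ A, conj (c y) * (M x y * g x) := by
  rw [map_sum, sum_inner]
  refine Finset.sum_congr rfl fun y hy => ?_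
  rw [single_eq_smul, map_smul, inner_smul_left, hW y hy,
    SchurAux.inner_sum_single_left, Finset.mul_sum]
  exact Finset.sum_congr rfl fun x _ => by rw [Complex.conj_conj]

lemma op_trunc (W : lp (fun _ : X => ℂ) 2 →L[ℂ] lp (fun _ : X => ℂ) 2)
    (B : Finset X) (hW : ∀ y ∉ B, W (lp.single 2 y 1) = 0)
    (f : lp (fun _ : X => ℂ) 2) :
    W f = W (∑ y ∈ B, lp.single 2 y (f y)) := by
  have h1 : HasSum (fun y : X => lp.single 2 y (f y)) f :=
    lp.hasSum_single (by norm_num) f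
  have h2 : HasSum (fun y : X => W (lp.single 2 y (f y))) (W f) :=
    W.hasSum h1
  have h0 : ∀ y ∉ B, W (lp.single 2 y (f y)) = 0 := by
    intro y hy
    rw [single_eq_smul, map_smul, hW y hy, smul_zero]
  have h3 : HasSum (fun y : X => W (lp.single 2 y (f y)))
      (∑ y ∈ B, W (lp.single 2 y (f y))) := hasSum_sum_of_ne_finset_zero h0
  rw [h2.unique h3, map_sum]

end SchurAux2

namespace SchurAux3

lemma parseval_fd {H : Type*} [NormedAddCommGroup H] [InnerProductSpace ℂ H]
    (V : Submodule ℂ H) [FiniteDimensional ℂ V]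
    (b : OrthonormalBasis (Fin (Module.finrank ℂ V)) ℂ V) (w : V) :
    ∑ i, ‖(inner ℂ (w : H) ((b i : H)) : ℂ)‖ ^ 2 = ‖(w : H)‖ ^ 2 := by
  have h := b.sum_inner_mul_inner w w
  rw [inner_self_eq_norm_sq_to_K] at h
  have h2 : ∀ i : Fin (Module.finrank ℂ V),
      (inner ℂ w (b i) : ℂ) * (inner ℂ (b i) w : ℂ)
        = ((‖(inner ℂ (w : H) ((b i : H)) : ℂ)‖ : ℂ)) ^ 2 := by
    intro i
    rw [← inner_conj_symm (b i) w, RCLike.mul_conj, Submodule.coe_inner]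
    norm_cast
  rw [Finset.sum_congr rfl fun i _ => h2 i] at h
  have hn : ‖w‖ = ‖(w : H)‖ := rfl
  rw [hn] at h
  have h' := congrArg Complex.re h
  simp only [Complex.re_sum, ← Complex.ofReal_pow, ← RCLike.ofReal_pow, Complex.ofReal_re, RCLike.ofReal_re] at h'
  exact h'

end SchurAux3

namespace SchurAux4

variable {X : Type*} [DecidableEq X]

lemma single_zero' (x : X) : (lp.single 2 x (0:ℂ) : lp (fun _ : X => ℂ) 2) = 0 := by
  refine lp.ext (funext fun z => ?_)
  by_cases h : z = x
  · subst h; simp [lp.single_apply_self]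
  · simp [lp.single_apply_ne _ _ _ h]

lemma sum_sq_coords_le (B : Finset X) (f : lp (fun _ : X => ℂ) 2) :
    ∑ y ∈ B, ‖f y‖ ^ 2 ≤ ‖f‖ ^ 2 := by
  have hp : (0:ℝ) < ENNReal.toReal 2 := by norm_num
  have h := lp.norm_rpow_eq_tsum hp f
  have hs := (lp.memℓp f).summable hp
  have hle := Summable.sum_le_tsum B (fun i _ => Real.rpow_nonneg (norm_nonneg _) _) hs
  rw [← h] at hle
  have e2 : ENNReal.toReal 2 = (2:ℝ) := by norm_num
  calc ∑ y ∈ B, ‖f y‖ ^ 2 = ∑ y ∈ B, ‖f y‖ ^ (ENNReal.toReal 2) := by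
        refine Finset.sum_congr rfl fun y _ => ?_
        rw [e2, ← Real.rpow_natCast]; norm_num
    _ ≤ ‖f‖ ^ (ENNReal.toReal 2) := hle
    _ = ‖f‖ ^ 2 := by rw [e2, ← Real.rpow_natCast]; norm_num

end SchurAux4

set_option maxHeartbeats 1600000 in
set_option synthInstance.maxHeartbeats 1000000 in
/-- Schur multiplier bound from a Hilbert space factorization: if
`k(x,y) = ⟨ξ(x), η(y)⟩` with `‖ξ(x)‖ ≤ 1`, `‖η(y)‖ ≤ 1`, then for any finitely
supported kernel `T` on `X × X`, the operator with matrix coefficients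
`k(x,y)·T(x,y)` has operator norm at most that of the operator with matrix `T`. -/
theorem stmt1 (X : Type*) [DecidableEq X]
    (H : Type*) [NormedAddCommGroup H] [InnerProductSpace ℂ H] [CompleteSpace H]
    (ξ η : X → H) (hξ : ∀ x, ‖ξ x‖ ≤ 1) (hη : ∀ y, ‖η y‖ ≤ 1)
    (k : X → X → ℂ) (hk : ∀ x y, k x y = (inner ℂ (ξ x) (η y) : ℂ))
    (T : X → X → ℂ) (hTfin : (Function.support fun p : X × X => T p.1 p.2).Finite)
    (TT ST : lp (fun _ : X => ℂ) 2 →L[ℂ] lp (fun _ : X => ℂ) 2)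
    (hTT : ∀ x y : X,
      (inner ℂ (TT (lp.single 2 y 1)) (lp.single 2 x (1 : ℂ)) : ℂ) = T x y)
    (hST : ∀ x y : X,
      (inner ℂ (ST (lp.single 2 y 1)) (lp.single 2 x (1 : ℂ)) : ℂ) = k x y * T x y) :
    ‖ST‖ ≤ ‖TT‖ := by
  classical
  set S : Finset (X × X) := hTfin.toFinset with hSdef
  set A : Finset X := S.image Prod.fst with hAdef
  set B : Finset X := S.image Prod.snd with hBdef
  have hTA : ∀ {x y : X}, T x y ≠ 0 → x ∈ A ∧ y ∈ B := by
    intro x y h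
    have hm : (x, y) ∈ S := hTfin.mem_toFinset.2 h
    exact ⟨Finset.mem_image.2 ⟨(x, y), hm, rfl⟩, Finset.mem_image.2 ⟨(x, y), hm, rfl⟩⟩
  -- coordinates of W (e y)
  have hcoord : ∀ (W : lp (fun _ : X => ℂ) 2 →L[ℂ] lp (fun _ : X => ℂ) 2) (M : X → X → ℂ),
      (∀ x y, (inner ℂ (W (lp.single 2 y 1)) (lp.single 2 x (1:ℂ)) : ℂ) = M x y) →
      ∀ y z, (W (lp.single 2 y (1:ℂ)) : ∀ _ : X, ℂ) z = conj (M z y) := by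
    intro W M hM y z
    have h := hM z y
    rw [lp.inner_single_right] at h
    have h' : conj ((W (lp.single 2 y (1:ℂ)) : ∀ _ : X, ℂ) z) = M z y := by
      simpa [RCLike.inner_apply] using h
    rw [← h', Complex.conj_conj]
  -- matrix representation of W (e y)
  have hrep : ∀ (W : lp (fun _ : X => ℂ) 2 →L[ℂ] lp (fun _ : X => ℂ) 2) (M : X → X → ℂ),
      (∀ x y, (inner ℂ (W (lp.single 2 y 1)) (lp.single 2 x (1:ℂ)) : ℂ) = M x y) →
      (∀ x y, x ∉ A → M x y = 0) →
      ∀ y, W (lp.single 2 y (1:ℂ)) = ∑ x ∈ A, lp.single 2 x (conj (M x y)) := by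
    intro W M hM hM0 y
    refine lp.ext (funext fun z => ?_)
    rw [hcoord W M hM y z, SchurAux.sum_single_apply]
    by_cases hzA : z ∈ A
    · rw [if_pos hzA]
    · rw [if_neg hzA, hM0 z y hzA, map_zero]
  have hM0A : ∀ x y : X, x ∉ A → T x y = 0 := by
    intro x y hx; by_contra h; exact hx (hTA h).1
  have hM0B : ∀ x y : X, y ∉ B → T x y = 0 := by
    intro x y hy; by_contra h; exact hy (hTA h).2
  have hSTrep : ∀ y, ST (lp.single 2 y (1:ℂ))
      = ∑ x ∈ A, lp.single 2 x (conj (k x y * T x y)) :=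
    hrep ST (fun x y => k x y * T x y) hST (fun x y hx => by
      show k x y * T x y = 0
      rw [hM0A x y hx, mul_zero])
  have hTTrep : ∀ y, TT (lp.single 2 y (1:ℂ))
      = ∑ x ∈ A, lp.single 2 x (conj (T x y)) := hrep TT T hTT hM0A
  have hSTzero : ∀ y ∉ B, ST (lp.single 2 y (1:ℂ)) = 0 := by
    intro y hy
    rw [hSTrep y]
    refine Finset.sum_eq_zero fun x _ => ?_
    rw [hM0B x y hy, mul_zero, map_zero, SchurAux4.single_zero']
  -- the finite-dimensional subspace and its orthonormal basis
  set V : Submodule ℂ H := Submodule.span ℂ ((A.image ξ ∪ B.image η : Finset H) : Set H)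
    with hVdef
  have hfd : FiniteDimensional ℂ V := FiniteDimensional.span_finset ℂ _
  set n := Module.finrank ℂ V with hndef
  set b := stdOrthonormalBasis ℂ V with hbdef
  have hξV : ∀ x ∈ A, ξ x ∈ V := fun x hx => Submodule.subset_span (by
    simp only [Finset.coe_union, Finset.coe_image, Set.mem_union, Set.mem_image]
    exact Or.inl ⟨x, hx, rfl⟩)
  have hηV : ∀ y ∈ B, η y ∈ V := fun y hy => Submodule.subset_span (by
    simp only [Finset.coe_union, Finset.coe_image, Set.mem_union, Set.mem_image]
    exact Or.inr ⟨y, hy, rfl⟩)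
  have hk' : ∀ x ∈ A, ∀ y ∈ B, k x y
      = ∑ i, (inner ℂ (ξ x) ((b i : H)) : ℂ) * (inner ℂ ((b i : H)) (η y) : ℂ) := by
    intro x hx y hy
    have h := b.sum_inner_mul_inner (⟨ξ x, hξV x hx⟩ : V) (⟨η y, hηV y hy⟩ : V)
    calc k x y = (inner ℂ (ξ x) (η y) : ℂ) := hk x y
      _ = (inner ℂ (⟨ξ x, hξV x hx⟩ : V) (⟨η y, hηV y hy⟩ : V) : ℂ) := rfl
      _ = ∑ i, (inner ℂ (⟨ξ x, hξV x hx⟩ : V) (b i) : ℂ) * (inner ℂ (b i) (⟨η y, hηV y hy⟩ : V) : ℂ) :=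
          h.symm
      _ = ∑ i, (inner ℂ (ξ x) ((b i : H)) : ℂ) * (inner ℂ ((b i : H)) (η y) : ℂ) := rfl
  -- the key inner product bound
  have key : ∀ f g : lp (fun _ : X => ℂ) 2,
      ‖(inner ℂ (ST f) g : ℂ)‖ ≤ ‖TT‖ * (‖f‖ * ‖g‖) := by
    intro f g
    have hSTfg : (inner ℂ (ST f) g : ℂ)
        = ∑ y ∈ B, ∑ x ∈ A, conj ((f : ∀ _ : X, ℂ) y) * ((k x y * T x y) * (g : ∀ _ : X, ℂ) x) := by
      rw [SchurAux2.op_trunc ST B hSTzero f,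
        SchurAux2.inner_op_sum ST A B (fun x y => k x y * T x y) (fun y _ => hSTrep y) _ g]
    set c : Fin n → X → ℂ := fun i y => (inner ℂ (η y) ((b i : H)) : ℂ) * (f : ∀ _ : X, ℂ) y
      with hcdef
    set d : Fin n → X → ℂ := fun i x => (inner ℂ (ξ x) ((b i : H)) : ℂ) * (g : ∀ _ : X, ℂ) x
      with hddef
    set fi : Fin n → lp (fun _ : X => ℂ) 2 := fun i => ∑ y ∈ B, lp.single 2 y (c i y) with hfidef
    set gi : Fin n → lp (fun _ : X => ℂ) 2 := fun i => ∑ x ∈ A, lp.single 2 x (d i x) with hgidef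
    have hTTfg : ∀ i, (inner ℂ (TT (fi i)) (gi i) : ℂ)
        = ∑ y ∈ B, ∑ x ∈ A, conj (c i y) * (T x y * d i x) := by
      intro i
      rw [hfidef]
      rw [SchurAux2.inner_op_sum TT A B T (fun y _ => hTTrep y) (c i) (gi i)]
      refine Finset.sum_congr rfl fun y hy => Finset.sum_congr rfl fun x hx => ?_
      have : ((gi i : lp (fun _ : X => ℂ) 2) : ∀ _ : X, ℂ) x = d i x := by
        rw [hgidef]
        rw [SchurAux.sum_single_apply, if_pos hx]
      rw [this]
    have hsw : ∑ i : Fin n, ∑ y ∈ B, ∑ x ∈ A, conj (c i y) * (T x y * d i x)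
        = ∑ y ∈ B, ∑ x ∈ A, ∑ i : Fin n, conj (c i y) * (T x y * d i x) := by
      rw [Finset.sum_comm]
      exact Finset.sum_congr rfl fun y _ => Finset.sum_comm
    have hmain : (inner ℂ (ST f) g : ℂ) = ∑ i, (inner ℂ (TT (fi i)) (gi i) : ℂ) := by
      calc (inner ℂ (ST f) g : ℂ)
          = ∑ y ∈ B, ∑ x ∈ A,
              conj ((f : ∀ _ : X, ℂ) y) * ((k x y * T x y) * (g : ∀ _ : X, ℂ) x) := hSTfg
        _ = ∑ y ∈ B, ∑ x ∈ A, ∑ i : Fin n, conj (c i y) * (T x y * d i x) := by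
            refine Finset.sum_congr rfl fun y hy => Finset.sum_congr rfl fun x hx => ?_
            rw [hk' x hx y hy, Finset.sum_mul, Finset.sum_mul, Finset.mul_sum]
            refine Finset.sum_congr rfl fun i _ => ?_
            simp only [hcdef, hddef, map_mul]
            rw [inner_conj_symm]
            ring
        _ = ∑ i : Fin n, ∑ y ∈ B, ∑ x ∈ A, conj (c i y) * (T x y * d i x) := hsw.symm
        _ = ∑ i, (inner ℂ (TT (fi i)) (gi i) : ℂ) :=
            Finset.sum_congr rfl fun i _ => (hTTfg i).symm
    have hfi : ∀ i, ‖fi i‖ ^ 2 = ∑ y ∈ B, ‖c i y‖ ^ 2 := fun i =>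
      SchurAux.norm_sq_sum_single B (c i)
    have hgi : ∀ i, ‖gi i‖ ^ 2 = ∑ x ∈ A, ‖d i x‖ ^ 2 := fun i =>
      SchurAux.norm_sq_sum_single A (d i)
    have hfsum : ∑ i : Fin n, ‖fi i‖ ^ 2 ≤ ‖f‖ ^ 2 := by
      calc ∑ i : Fin n, ‖fi i‖ ^ 2
          = ∑ i : Fin n, ∑ y ∈ B, ‖c i y‖ ^ 2 := Finset.sum_congr rfl fun i _ => hfi i
        _ = ∑ y ∈ B, ∑ i : Fin n, ‖c i y‖ ^ 2 := Finset.sum_comm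
        _ ≤ ∑ y ∈ B, ‖(f : ∀ _ : X, ℂ) y‖ ^ 2 := by
            refine Finset.sum_le_sum fun y hy => ?_
            have hpar := SchurAux3.parseval_fd V b (⟨η y, hηV y hy⟩ : V)
            have hη2 : ‖η y‖ ^ 2 ≤ 1 := by nlinarith [hη y, norm_nonneg (η y)]
            calc ∑ i : Fin n, ‖c i y‖ ^ 2
                = ∑ i : Fin n, ‖(inner ℂ (η y) ((b i : H)) : ℂ)‖ ^ 2 * ‖(f : ∀ _ : X, ℂ) y‖ ^ 2 := by
                  refine Finset.sum_congr rfl fun i _ => ?_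
                  rw [hcdef]
                  rw [norm_mul, mul_pow]
              _ = (∑ i : Fin n, ‖(inner ℂ (η y) ((b i : H)) : ℂ)‖ ^ 2) * ‖(f : ∀ _ : X, ℂ) y‖ ^ 2 :=
                  (Finset.sum_mul _ _ _).symm
              _ = ‖η y‖ ^ 2 * ‖(f : ∀ _ : X, ℂ) y‖ ^ 2 := by rw [hpar]
              _ ≤ 1 * ‖(f : ∀ _ : X, ℂ) y‖ ^ 2 :=
                  mul_le_mul_of_nonneg_right hη2 (by positivity)
              _ = ‖(f : ∀ _ : X, ℂ) y‖ ^ 2 := one_mul _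
        _ ≤ ‖f‖ ^ 2 := SchurAux4.sum_sq_coords_le B f
    have hgsum : ∑ i : Fin n, ‖gi i‖ ^ 2 ≤ ‖g‖ ^ 2 := by
      calc ∑ i : Fin n, ‖gi i‖ ^ 2
          = ∑ i : Fin n, ∑ x ∈ A, ‖d i x‖ ^ 2 := Finset.sum_congr rfl fun i _ => hgi i
        _ = ∑ x ∈ A, ∑ i : Fin n, ‖d i x‖ ^ 2 := Finset.sum_comm
        _ ≤ ∑ x ∈ A, ‖(g : ∀ _ : X, ℂ) x‖ ^ 2 := by
            refine Finset.sum_le_sum fun x hx => ?_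
            have hpar := SchurAux3.parseval_fd V b (⟨ξ x, hξV x hx⟩ : V)
            have hξ2 : ‖ξ x‖ ^ 2 ≤ 1 := by nlinarith [hξ x, norm_nonneg (ξ x)]
            calc ∑ i : Fin n, ‖d i x‖ ^ 2
                = ∑ i : Fin n, ‖(inner ℂ (ξ x) ((b i : H)) : ℂ)‖ ^ 2 * ‖(g : ∀ _ : X, ℂ) x‖ ^ 2 := by
                  refine Finset.sum_congr rfl fun i _ => ?_
                  rw [hddef]
                  rw [norm_mul, mul_pow]
              _ = (∑ i : Fin n, ‖(inner ℂ (ξ x) ((b i : H)) : ℂ)‖ ^ 2) * ‖(g : ∀ _ : X, ℂ) x‖ ^ 2 :=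
                  (Finset.sum_mul _ _ _).symm
              _ = ‖ξ x‖ ^ 2 * ‖(g : ∀ _ : X, ℂ) x‖ ^ 2 := by rw [hpar]
              _ ≤ 1 * ‖(g : ∀ _ : X, ℂ) x‖ ^ 2 :=
                  mul_le_mul_of_nonneg_right hξ2 (by positivity)
              _ = ‖(g : ∀ _ : X, ℂ) x‖ ^ 2 := one_mul _
        _ ≤ ‖g‖ ^ 2 := SchurAux4.sum_sq_coords_le A g
    calc ‖(inner ℂ (ST f) g : ℂ)‖
        = ‖∑ i, (inner ℂ (TT (fi i)) (gi i) : ℂ)‖ := by rw [hmain]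
      _ ≤ ∑ i, ‖(inner ℂ (TT (fi i)) (gi i) : ℂ)‖ := norm_sum_le _ _
      _ ≤ ∑ i, ‖TT‖ * (‖fi i‖ * ‖gi i‖) := by
          refine Finset.sum_le_sum fun i _ => ?_
          calc ‖(inner ℂ (TT (fi i)) (gi i) : ℂ)‖
              ≤ ‖TT (fi i)‖ * ‖gi i‖ := norm_inner_le_norm _ _
            _ ≤ (‖TT‖ * ‖fi i‖) * ‖gi i‖ :=
                mul_le_mul_of_nonneg_right (TT.le_opNorm (fi i)) (norm_nonneg _)
            _ = ‖TT‖ * (‖fi i‖ * ‖gi i‖) := mul_assoc _ _ _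
      _ = ‖TT‖ * ∑ i, ‖fi i‖ * ‖gi i‖ := (Finset.mul_sum _ _ _).symm
      _ ≤ ‖TT‖ * (Real.sqrt (∑ i, ‖fi i‖ ^ 2) * Real.sqrt (∑ i, ‖gi i‖ ^ 2)) :=
          mul_le_mul_of_nonneg_left (Real.sum_mul_le_sqrt_mul_sqrt _ _ _) (norm_nonneg TT)
      _ ≤ ‖TT‖ * (‖f‖ * ‖g‖) := by
          refine mul_le_mul_of_nonneg_left ?_ (norm_nonneg TT)
          have e1 : Real.sqrt (∑ i, ‖fi i‖ ^ 2) ≤ ‖f‖ := by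
            rw [show ‖f‖ = Real.sqrt (‖f‖ ^ 2) from (Real.sqrt_sq (norm_nonneg f)).symm]
            exact Real.sqrt_le_sqrt hfsum
          have e2 : Real.sqrt (∑ i, ‖gi i‖ ^ 2) ≤ ‖g‖ := by
            rw [show ‖g‖ = Real.sqrt (‖g‖ ^ 2) from (Real.sqrt_sq (norm_nonneg g)).symm]
            exact Real.sqrt_le_sqrt hgsum
          exact mul_le_mul e1 e2 (Real.sqrt_nonneg _) (norm_nonneg f)
  refine ST.opNorm_le_bound (norm_nonneg TT) fun f => ?_
  have h := key f (ST f)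
  have hself : ‖(inner ℂ (ST f) (ST f) : ℂ)‖ = ‖ST f‖ ^ 2 := by
    rw [inner_self_eq_norm_sq_to_K, norm_pow, RCLike.norm_ofReal, abs_norm]
  rw [hself] at h
  rcases (norm_nonneg (ST f)).eq_or_lt with h0 | h0
  · rw [← h0]; positivity
  · have h2 : ‖ST f‖ * ‖ST f‖ ≤ (‖TT‖ * ‖f‖) * ‖ST f‖ := by
      calc ‖ST f‖ * ‖ST f‖ = ‖ST f‖ ^ 2 := (sq _).symm
        _ ≤ ‖TT‖ * (‖f‖ * ‖ST f‖) := h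
        _ = (‖TT‖ * ‖f‖) * ‖ST f‖ := (mul_assoc _ _ _).symm
    exact le_of_mul_le_mul_right h2 h0
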